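/- Let F¹ and F⁰ be finite-dimensional complex vector spaces with dim F¹ = n, dim F⁰ = k-1, and k-1 ≤ n, and let η : F¹ → F⁰ be a surjective linear map. Define Λ : ∧ⁿF¹ → ∧ⁿ(F¹ ⊕ F⁰) by Λ(e₁ ∧ ⋯ ∧ eₙ) = Σ_{1≤i₁<⋯<i_{k-1}≤n} e₁ ∧ ⋯ ∧ η(e_{i₁}) ∧ ⋯ ∧ η(e_{i_{k-1}}) ∧ ⋯ ∧ eₙ (where η is applied in the chosen k-1 slots, viewing F¹ and F⁰ as subspaces of F¹ ⊕ F⁰). Then Λ is a nonzero linear map. -/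

import Mathlib

set_option maxHeartbeats 1000000

open ExteriorAlgebra

namespace Stmt1Aux

variable {F1 F0 : Type*} [AddCommGroup F1] [Module ℂ F1] [AddCommGroup F0] [Module ℂ F0]

/-- The vector family appearing in each summand. -/
def vec {n : ℕ} (η : F1 →ₗ[ℂ] F0) (s : Finset (Fin n)) (e : Fin n → F1) : Fin n → F1 × F0 :=
  fun i => if i ∈ s then ((0 : F1), η (e i)) else (e i, (0 : F0))

/-- The sum, as a multilinear map. -/
noncomputable def G (n m : ℕ) (η : F1 →ₗ[ℂ] F0) :
    MultilinearMap ℂ (fun _ : Fin n => F1) (ExteriorAlgebra ℂ (F1 × F0)) :=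
  ∑ s ∈ Finset.powersetCard m (Finset.univ : Finset (Fin n)),
    (ExteriorAlgebra.ιMulti ℂ n (M := F1 × F0)).toMultilinearMap.compLinearMap
      (fun i => if i ∈ s then (LinearMap.inr ℂ F1 F0).comp η else LinearMap.inl ℂ F1 F0)

lemma G_apply (n m : ℕ) (η : F1 →ₗ[ℂ] F0) (e : Fin n → F1) :
    G n m η e = ∑ s ∈ Finset.powersetCard m (Finset.univ : Finset (Fin n)),
      ExteriorAlgebra.ιMulti ℂ n (vec η s e) := by
  rw [G, MultilinearMap.sum_apply]
  refine Finset.sum_congr rfl fun s _ => ?_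
  simp only [MultilinearMap.compLinearMap_apply, AlternatingMap.coe_multilinearMap]
  congr 1
  funext i
  by_cases h : i ∈ s <;> simp [vec, h]

lemma pair_symmDiff_eq {n : ℕ} {i j : Fin n} (hij : i ≠ j) {s : Finset (Fin n)}
    (hi : i ∈ s) (hj : j ∉ s) : symmDiff s ({i, j} : Finset (Fin n)) = insert j (s.erase i) := by
  ext l
  simp only [Finset.mem_symmDiff, Finset.mem_insert, Finset.mem_erase, Finset.mem_singleton]
  by_cases hli : l = i <;> by_cases hlj : l = j <;> subst_vars <;> tauto

lemma card_pair_symmDiff {n : ℕ} {i j : Fin n} (hij : i ≠ j) {s : Finset (Fin n)}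
    (hs : ¬ (i ∈ s ↔ j ∈ s)) : (symmDiff s ({i, j} : Finset (Fin n))).card = s.card := by
  by_cases hi : i ∈ s
  case neg =>
    have hj : j ∈ s := by tauto
    rw [show ({i, j} : Finset (Fin n)) = {j, i} by ext; simp; tauto,
      pair_symmDiff_eq hij.symm hj hi, Finset.card_insert_of_notMem (by simp [hi]),
      Finset.card_erase_of_mem hj]
    have : 1 ≤ s.card := Finset.card_pos.mpr ⟨j, hj⟩
    omega
  case pos =>
    have hj : j ∉ s := by tauto
    rw [pair_symmDiff_eq hij hi hj, Finset.card_insert_of_notMem (by simp [hj]),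
      Finset.card_erase_of_mem hi]
    have : 1 ≤ s.card := Finset.card_pos.mpr ⟨i, hi⟩
    omega

lemma mem_pair_symmDiff_left {n : ℕ} {i j : Fin n} (s : Finset (Fin n)) :
    i ∈ symmDiff s ({i, j} : Finset (Fin n)) ↔ i ∉ s := by
  simp [Finset.mem_symmDiff]

lemma mem_pair_symmDiff_right {n : ℕ} {i j : Fin n} (s : Finset (Fin n)) :
    j ∈ symmDiff s ({i, j} : Finset (Fin n)) ↔ j ∉ s := by
  simp [Finset.mem_symmDiff]

lemma mem_pair_symmDiff_other {n : ℕ} {i j l : Fin n} (s : Finset (Fin n))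
    (hli : l ≠ i) (hlj : l ≠ j) : l ∈ symmDiff s ({i, j} : Finset (Fin n)) ↔ l ∈ s := by
  simp [Finset.mem_symmDiff, hli, hlj]

lemma vec_symmDiff {n : ℕ} (η : F1 →ₗ[ℂ] F0) {i j : Fin n} (hij : i ≠ j)
    {e : Fin n → F1} (heq : e i = e j) {s : Finset (Fin n)} (hs : ¬ (i ∈ s ↔ j ∈ s)) :
    vec η (symmDiff s ({i, j} : Finset (Fin n))) e = vec η s e ∘ Equiv.swap i j := by
  funext l
  by_cases hli : l = i
  · subst hli
    simp only [Function.comp_apply, Equiv.swap_apply_left, vec,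
      mem_pair_symmDiff_left s]
    by_cases hl : l ∈ s
    · have hjs : j ∉ s := by tauto
      simp [hl, hjs, heq]
    · have hjs : j ∈ s := by tauto
      simp [hl, hjs, heq]
  · by_cases hlj : l = j
    · subst hlj
      simp only [Function.comp_apply, Equiv.swap_apply_right, vec,
        mem_pair_symmDiff_right s]
      by_cases hl : l ∈ s
      · have his : i ∉ s := by tauto
        simp [hl, his, heq]
      · have his : i ∈ s := by tauto
        simp [hl, his, heq]
    · simp only [Function.comp_apply, Equiv.swap_apply_of_ne_of_ne hli hlj, vec,
        mem_pair_symmDiff_other s hli hlj]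

lemma G_alt (n m : ℕ) (η : F1 →ₗ[ℂ] F0) (e : Fin n → F1) {i j : Fin n}
    (heq : e i = e j) (hij : i ≠ j) : G n m η e = 0 := by
  classical
  rw [G_apply]
  refine Finset.sum_involution
    (fun s _ => if i ∈ s ↔ j ∈ s then s else symmDiff s ({i, j} : Finset (Fin n))) ?_ ?_ ?_ ?_
  · intro s hs
    by_cases h : i ∈ s ↔ j ∈ s
    · simp only [if_pos h]
      have h0 : ExteriorAlgebra.ιMulti ℂ n (vec η s e) = 0 := by
        refine AlternatingMap.map_eq_zero_of_eq _ _ ?_ hij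
        by_cases hi : i ∈ s
        · have hj : j ∈ s := h.mp hi
          simp [vec, hi, hj, heq]
        · have hj : j ∉ s := fun hj => hi (h.mpr hj)
          simp [vec, hi, hj, heq]
      rw [h0]; simp
    · simp only [if_neg h]
      rw [vec_symmDiff η hij heq h, AlternatingMap.map_swap _ _ hij]
      simp
  · intro s hs hne hc
    by_cases h : i ∈ s ↔ j ∈ s
    · refine hne (AlternatingMap.map_eq_zero_of_eq _ _ ?_ hij)
      by_cases hi : i ∈ s
      · have hj : j ∈ s := h.mp hi
        simp [vec, hi, hj, heq]
      · have hj : j ∉ s := fun hj => hi (h.mpr hj)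
        simp [vec, hi, hj, heq]
    · simp only [if_neg h] at hc
      have : i ∈ symmDiff s ({i, j} : Finset (Fin n)) ↔ i ∉ s := mem_pair_symmDiff_left s
      rw [hc] at this
      tauto
  · intro s hs
    by_cases h : i ∈ s ↔ j ∈ s
    · simpa only [if_pos h] using hs
    · simp only [if_neg h]
      rw [Finset.mem_powersetCard_univ] at hs ⊢
      rw [card_pair_symmDiff hij h, hs]
  · intro s hs
    by_cases h : i ∈ s ↔ j ∈ s
    · simp only [if_pos h, if_pos h]
    · simp only [if_neg h]
      have h2 : ¬ (i ∈ symmDiff s ({i, j} : Finset (Fin n)) ↔ j ∈ symmDiff s ({i, j} : Finset (Fin n))) := by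
        rw [mem_pair_symmDiff_left s, mem_pair_symmDiff_right s]
        tauto
      rw [if_neg h2, symmDiff_symmDiff_cancel_right]

/-- The sum, as an alternating map. -/
noncomputable def Falt (n m : ℕ) (η : F1 →ₗ[ℂ] F0) :
    F1 [⋀^Fin n]→ₗ[ℂ] ExteriorAlgebra ℂ (F1 × F0) :=
  { G n m η with
    map_eq_zero_of_eq' := fun e i j heq hij => G_alt n m η e heq hij }

lemma Falt_apply (n m : ℕ) (η : F1 →ₗ[ℂ] F0) (e : Fin n → F1) :
    Falt n m η e = ∑ s ∈ Finset.powersetCard m (Finset.univ : Finset (Fin n)),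
      ExteriorAlgebra.ιMulti ℂ n (vec η s e) := G_apply n m η e

end Stmt1Aux

open Stmt1Aux in
/-- for a surjective linear map `η : F¹ → F⁰` with
`dim F¹ = n`, `dim F⁰ = k - 1 ≤ n`, the linear map
`Λ : ⋀ⁿF¹ → ⋀ⁿ(F¹ ⊕ F⁰)` defined on wedges by
`Λ(e₁ ∧ ⋯ ∧ eₙ) = ∑_{i₁<⋯<i_{k-1}} e₁ ∧ ⋯ ∧ η(e_{i₁}) ∧ ⋯ ∧ η(e_{i_{k-1}}) ∧ ⋯ ∧ eₙ`
(applying `η` in the chosen `k-1` slots, viewing `F¹, F⁰` as the two factors of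
`F¹ × F⁰`) is a nonzero linear map. -/
theorem stmt_1 (n k : ℕ) (hk : 2 ≤ k) (hkn : k - 1 ≤ n)
    (F1 F0 : Type*) [AddCommGroup F1] [Module ℂ F1] [AddCommGroup F0] [Module ℂ F0]
    (hF1 : Module.finrank ℂ F1 = n) (hF0 : Module.finrank ℂ F0 = k - 1)
    (η : F1 →ₗ[ℂ] F0) (hsurj : Function.Surjective η) :
    ∃ Λ : (⋀[ℂ]^n F1) →ₗ[ℂ] (⋀[ℂ]^n (F1 × F0)),
      (∀ e : Fin n → F1,
        (Λ ⟨ExteriorAlgebra.ιMulti ℂ n e,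
             ExteriorAlgebra.ιMulti_range ℂ n (Set.mem_range_self e)⟩ :
            ExteriorAlgebra ℂ (F1 × F0)) =
          ∑ s ∈ Finset.powersetCard (k - 1) (Finset.univ : Finset (Fin n)),
            ExteriorAlgebra.ιMulti ℂ n
              (fun i => if i ∈ s then ((0 : F1), η (e i)) else (e i, (0 : F0)))) ∧
      Λ ≠ 0 := by
  classical
  set m := k - 1 with hm
  -- the lift of the alternating map to the exterior algebra
  let fam : ∀ i, F1 [⋀^Fin i]→ₗ[ℂ] ExteriorAlgebra ℂ (F1 × F0) :=
    Function.update (fun _ => 0) n (Falt n m η)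
  have hfamn : fam n = Falt n m η := Function.update_self _ _ _
  let L : ExteriorAlgebra ℂ F1 →ₗ[ℂ] ExteriorAlgebra ℂ (F1 × F0) :=
    ExteriorAlgebra.liftAlternating fam
  have hL : ∀ e : Fin n → F1, L (ExteriorAlgebra.ιMulti ℂ n e) =
      ∑ s ∈ Finset.powersetCard m (Finset.univ : Finset (Fin n)),
        ExteriorAlgebra.ιMulti ℂ n (vec η s e) := by
    intro e
    rw [show L (ExteriorAlgebra.ιMulti ℂ n e) = fam n e from
      ExteriorAlgebra.liftAlternating_apply_ιMulti fam e, hfamn, Falt_apply]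
  have hrange : ∀ x ∈ (⋀[ℂ]^n F1), L x ∈ (⋀[ℂ]^n (F1 × F0)) := by
    intro x hx
    rw [← ExteriorAlgebra.ιMulti_span_fixedDegree] at hx
    induction hx using Submodule.span_induction with
    | mem y hy =>
      obtain ⟨e, rfl⟩ := hy
      rw [hL]
      exact Submodule.sum_mem _ fun s _ =>
        ExteriorAlgebra.ιMulti_range ℂ n (Set.mem_range_self _)
    | zero => simp
    | add y z _ _ hy hz => rw [map_add]; exact Submodule.add_mem _ hy hz
    | smul c y _ hy => rw [map_smul]; exact Submodule.smul_mem _ _ hy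
  refine ⟨L.restrict hrange, fun e => ?_, ?_⟩
  · rw [LinearMap.restrict_coe_apply, hL]
    exact Finset.sum_congr rfl fun s _ => rfl
  · -- nonzero
    have hm1 : 1 ≤ m := by omega
    have hn1 : 1 ≤ n := le_trans hm1 hkn
    have hfd1 : FiniteDimensional ℂ F1 := Module.finite_of_finrank_pos (by rw [hF1]; omega)
    have hfd0 : FiniteDimensional ℂ F0 := Module.finite_of_finrank_pos (by rw [hF0]; omega)
    obtain ⟨σ, hσ⟩ := η.exists_rightInverse_of_surjective (LinearMap.range_eq_top.mpr hsurj)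
    have hησ : ∀ y, η (σ y) = y := fun y => by
      have := DFunLike.congr_fun hσ y
      simpa using this
    set c : Module.Basis (Fin m) ℂ F0 := Module.finBasisOfFinrankEq ℂ F0 hF0 with hc
    have hker : Module.finrank ℂ (LinearMap.ker η) = n - m := by
      have h1 := LinearMap.finrank_range_add_finrank_ker η
      rw [LinearMap.range_eq_top.mpr hsurj, finrank_top, hF0, hF1] at h1
      omega
    set κ : Module.Basis (Fin (n - m)) ℂ (LinearMap.ker η) := Module.finBasisOfFinrankEq ℂ _ hker
      with hκ
    obtain ⟨q, hq⟩ := Submodule.exists_isCompl (LinearMap.ker η)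
    set π : F1 →ₗ[ℂ] (LinearMap.ker η) := Submodule.linearProjOfIsCompl _ _ hq with hπ
    set e : Fin n → F1 := fun i =>
      if h : (i : ℕ) < m then σ (c ⟨i, h⟩)
      else (κ ⟨(i : ℕ) - m, by have := i.isLt; omega⟩ : LinearMap.ker η) with he
    set s₀ : Finset (Fin n) := Finset.map ⟨Fin.castLE hkn, Fin.castLE_injective hkn⟩
      Finset.univ with hs₀
    have hs₀mem : ∀ j : Fin n, j ∈ s₀ ↔ (j : ℕ) < m := by
      intro j
      simp only [hs₀, Finset.mem_map, Finset.mem_univ, true_and, Function.Embedding.coeFn_mk]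
      constructor
      · rintro ⟨a, rfl⟩; exact a.isLt
      · intro h; exact ⟨⟨(j : ℕ), h⟩, Fin.ext rfl⟩
    have hs₀card : s₀.card = m := by simp [hs₀]
    set v : Fin n → F1 × F0 := vec η s₀ e with hv
    have hsum : ∑ s ∈ Finset.powersetCard m (Finset.univ : Finset (Fin n)),
        ExteriorAlgebra.ιMulti ℂ n (vec η s e) = ExteriorAlgebra.ιMulti ℂ n v := by
      rw [Finset.sum_eq_single s₀]
      · intro s hsmem hne
        rw [Finset.mem_powersetCard_univ] at hsmem
        have hex : ∃ j ∈ s, ¬ ((j : ℕ) < m) := by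
          by_contra hcon
          push_neg at hcon
          have hsub : s ⊆ s₀ := fun j hj => (hs₀mem j).mpr (hcon j hj)
          exact hne (Finset.eq_of_subset_of_card_le hsub (by rw [hsmem, hs₀card]))
        obtain ⟨j, hjs, hjm⟩ := hex
        have hz : vec η s e j = 0 := by
          have hη0 : η (e j) = 0 := by
            rw [he]
            simp only [dif_neg hjm]
            exact (κ _).2
          simp [vec, hjs, hη0, Prod.mk_eq_zero]
        exact AlternatingMap.map_coord_zero _ j hz
      · intro h0
        exact absurd (Finset.mem_powersetCard_univ.mpr hs₀card) h0
    set φ : Fin n → (F1 × F0 →ₗ[ℂ] ℂ) := fun i =>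
      if h : (i : ℕ) < m then (c.coord ⟨i, h⟩).comp (LinearMap.snd ℂ F1 F0)
      else (κ.coord ⟨(i : ℕ) - m, by have := i.isLt; omega⟩).comp
        (π.comp (LinearMap.fst ℂ F1 F0)) with hφ
    set P : F1 × F0 →ₗ[ℂ] (Fin n → ℂ) := LinearMap.pi φ with hP
    set A : (F1 × F0) [⋀^Fin n]→ₗ[ℂ] ℂ :=
      (Matrix.detRowAlternating : (Fin n → ℂ) [⋀^Fin n]→ₗ[ℂ] ℂ).compLinearMap P
      with hA
    have hvj : ∀ j : Fin n, v j = if h : (j : ℕ) < m then ((0 : F1), (c ⟨j, h⟩ : F0))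
        else ((κ ⟨(j : ℕ) - m, by have := j.isLt; omega⟩ : LinearMap.ker η), (0 : F0)) := by
      intro j
      by_cases h : (j : ℕ) < m
      · have hjs : j ∈ s₀ := (hs₀mem j).mpr h
        rw [hv, dif_pos h]
        simp only [vec, if_pos hjs, he, dif_pos h, hησ]
      · have hjs : j ∉ s₀ := fun hcmem => h ((hs₀mem j).mp hcmem)
        rw [hv, dif_neg h]
        simp only [vec, if_neg hjs, he, dif_neg h]
    have hφv : ∀ i j : Fin n, φ i (v j) = if i = j then 1 else 0 := by
      intro i j
      by_cases hi : (i : ℕ) < m <;> by_cases hj : (j : ℕ) < m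
      · rw [hvj j, dif_pos hj, hφ]
        simp only [dif_pos hi, LinearMap.comp_apply, LinearMap.snd_apply]
        rw [Module.Basis.coord_apply, Module.Basis.repr_self, Finsupp.single_apply]
        rcases eq_or_ne i j with rfl | hne
        · simp
        · rw [if_neg (by simp only [Fin.ext_iff]; exact fun hcc => hne (Fin.ext hcc.symm)),
            if_neg hne]
      · rw [hvj j, dif_neg hj, hφ]
        simp only [dif_pos hi, LinearMap.comp_apply, LinearMap.snd_apply]
        rw [map_zero, if_neg (by intro hcc; subst hcc; omega)]
      · rw [hvj j, dif_pos hj, hφ]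
        simp only [dif_neg hi, LinearMap.comp_apply, LinearMap.fst_apply]
        rw [map_zero, map_zero, if_neg (by intro hcc; subst hcc; omega)]
      · rw [hvj j, dif_neg hj, hφ]
        simp only [dif_neg hi, LinearMap.comp_apply, LinearMap.fst_apply]
        rw [hπ, Submodule.linearProjOfIsCompl, Submodule.projectionOnto_apply_left hq,
          Module.Basis.coord_apply, Module.Basis.repr_self, Finsupp.single_apply]
        rcases eq_or_ne i j with rfl | hne
        · simp
        · rw [if_neg (by
            simp only [Fin.ext_iff]
            intro hcc
            exact hne (Fin.ext (by omega))), if_neg hne]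
    have hAv : A v = 1 := by
      rw [hA, AlternatingMap.compLinearMap_apply]
      have hPv : (fun i => P (v i)) = (1 : Matrix (Fin n) (Fin n) ℂ) := by
        funext i j
        simp only [hP, LinearMap.pi_apply]
        rw [hφv j i, Matrix.one_apply]
        by_cases hcc : i = j
        · simp [hcc]
        · simp [hcc, Ne.symm hcc]
      rw [hPv]
      show Matrix.det (1 : Matrix (Fin n) (Fin n) ℂ) = 1
      exact Matrix.det_one
    set famA : ∀ i : ℕ, (F1 × F0) [⋀^Fin i]→ₗ[ℂ] ℂ := Function.update (fun _ => 0) n A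
      with hfamA
    have hne0 : ExteriorAlgebra.ιMulti ℂ n (M := F1 × F0) v ≠ 0 := by
      intro hz
      have h1 : ExteriorAlgebra.liftAlternating famA
          (ExteriorAlgebra.ιMulti ℂ n v) = famA n v :=
        ExteriorAlgebra.liftAlternating_apply_ιMulti famA v
      rw [hz, map_zero, hfamA, Function.update_self, hAv] at h1
      exact one_ne_zero h1.symm
    intro h0
    apply hne0
    rw [← hsum, ← hL e]
    have h2 : (L.restrict hrange) ⟨ExteriorAlgebra.ιMulti ℂ n e,
        ExteriorAlgebra.ιMulti_range ℂ n (Set.mem_range_self e)⟩ = 0 := by rw [h0]; rfl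
    have h3 := congrArg (fun z : (⋀[ℂ]^n (F1 × F0)) => (z : ExteriorAlgebra ℂ (F1 × F0))) h2
    simpa [LinearMap.restrict_coe_apply] using h3
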